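/- For every point x of Minkowski space and every r > 0, the set B_Z(x;r) = (B_E(x;r) \ N(x)) ∪ {x} is open in the Zeeman fine topology. -/
import Mathlib


noncomputable section

/-- Minkowski space: `ℝ⁴` with the Euclidean topology/metric structure. -/
abbrev Mink : Type := EuclideanSpace ℝ (Fin 4)

/-- The Minkowski quadratic form `Q(v) = −v₀² + v₁² + v₂² + v₃²`. -/
def Q (v : Mink) : ℝ := -(v 0) ^ 2 + (v 1) ^ 2 + (v 2) ^ 2 + (v 3) ^ 2

/-- A spacelike hyperplane: a 3-dimensional affine subspace all of whose nonzero
direction vectors are spacelike (`Q > 0`). -/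
def IsSpacelikeHyperplane (B : Set Mink) : Prop :=
  ∃ (x : Mink) (H : Submodule ℝ Mink), Module.finrank ℝ H = 3 ∧
    (∀ w ∈ H, w ≠ 0 → 0 < Q w) ∧ B = {y | y - x ∈ H}

/-- A timelike line: an affine line with timelike direction (`Q < 0`). -/
def IsTimelikeLine (B : Set Mink) : Prop :=
  ∃ (x v : Mink), Q v < 0 ∧ B = {y | ∃ t : ℝ, y = x + t • v}

/-- A set is Zeeman-open iff its intersection with every spacelike hyperplane and
every timelike line is open in the Euclidean subspace topology of that set. -/
def ZeemanOpen (A : Set Mink) : Prop :=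
  ∀ B : Set Mink, IsSpacelikeHyperplane B ∨ IsTimelikeLine B →
    ∃ U : Set Mink, IsOpen U ∧ A ∩ B = U ∩ B

/-- The null cone at `x`. -/
def nullCone (x : Mink) : Set Mink := {y | Q (y - x) = 0}

/-- The Zeeman ball `B_Z(x;r) = (B_E(x;r) \ N(x)) ∪ {x}`. -/
def BZ (x : Mink) (r : ℝ) : Set Mink := (Metric.ball x r \ nullCone x) ∪ {x}

lemma Q_continuous : Continuous Q := by
  have h : ∀ i : Fin 4, Continuous fun v : Mink => v i := fun i =>
    (EuclideanSpace.proj i).continuous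
  unfold Q
  fun_prop

lemma nullCone_closed (x : Mink) : IsClosed (nullCone x) := by
  have : nullCone x = (fun y => Q (y - x)) ⁻¹' {0} := rfl
  rw [this]
  exact IsClosed.preimage (Q_continuous.comp (continuous_id.sub continuous_const))
    isClosed_singleton

lemma Q_smul (c : ℝ) (v : Mink) : Q (c • v) = c ^ 2 * Q v := by
  simp only [Q, PiLp.smul_apply, smul_eq_mul]
  ring

/-- For every point `x` of Minkowski space and every `r > 0`, the
Zeeman ball `B_Z(x;r) = (B_E(x;r) \ N(x)) ∪ {x}` is open in the Zeeman fine
topology. -/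
theorem stmt_6 (x : Mink) (r : ℝ) (hr : 0 < r) : ZeemanOpen (BZ x r) := by
  intro B hB
  by_cases hx : x ∈ B
  · -- B ∩ nullCone x = {x}
    refine ⟨Metric.ball x r, Metric.isOpen_ball, ?_⟩
    have hcone : B ∩ nullCone x ⊆ {x} := by
      rcases hB with ⟨x', H, _, hspace, hBeq⟩ | ⟨x', v, hv, hBeq⟩
      · intro y ⟨hyB, hyN⟩
        rw [hBeq] at hyB hx
        have hw : y - x ∈ H := by
          have := H.sub_mem hyB hx
          simpa [sub_sub_sub_cancel_right] using this
        by_contra hne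
        have hne' : y - x ≠ 0 := sub_ne_zero.mpr hne
        exact absurd hyN (ne_of_gt (hspace _ hw hne'))
      · intro y ⟨hyB, hyN⟩
        rw [hBeq] at hyB hx
        obtain ⟨t, ht⟩ := hyB
        obtain ⟨s, hs⟩ := hx
        have hyx : y - x = (t - s) • v := by
          rw [ht, hs, sub_smul]; abel
        have : Q (y - x) = (t - s) ^ 2 * Q v := by rw [hyx, Q_smul]
        rw [hyN] at this
        have hts : t = s := by
          by_contra h
          have hne : t - s ≠ 0 := sub_ne_zero.mpr h
          have h2 : (0:ℝ) < (t - s) ^ 2 := by positivity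
          have h3 : (t - s) ^ 2 * Q v < 0 := mul_neg_of_pos_of_neg h2 hv
          linarith
        rw [Set.mem_singleton_iff, ht, hs, hts]
    ext y
    simp only [BZ, Set.mem_inter_iff, Set.mem_union, Set.mem_diff,
      Set.mem_singleton_iff]
    constructor
    · rintro ⟨⟨hb, _⟩ | rfl, hB'⟩
      · exact ⟨hb, hB'⟩
      · exact ⟨Metric.mem_ball_self hr, hB'⟩
    · rintro ⟨hb, hB'⟩
      by_cases hN : y ∈ nullCone x
      · exact ⟨Or.inr (hcone ⟨hB', hN⟩), hB'⟩
      · exact ⟨Or.inl ⟨hb, hN⟩, hB'⟩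
  · refine ⟨Metric.ball x r \ nullCone x,
      Metric.isOpen_ball.sdiff (nullCone_closed x), ?_⟩
    ext y
    simp only [BZ, Set.mem_inter_iff, Set.mem_union, Set.mem_diff,
      Set.mem_singleton_iff]
    constructor
    · rintro ⟨h | rfl, hB'⟩
      · exact ⟨h, hB'⟩
      · exact absurd hB' hx
    · rintro ⟨h, hB'⟩
      exact ⟨Or.inl h, hB'⟩
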